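/- Let B₁, …, B_m be defined by Bᵢ(τ) = 2ρᵢ(e^{θᵢτ} − 1)/((θᵢ − βᵢ)(e^{θᵢτ} − 1) + 2θᵢ) with ρᵢ > 0, θᵢ = √(βᵢ² + 4ρᵢ), and assume the pairs (ρᵢ, βᵢ) are pairwise distinct. Then B₁, …, B_m are linearly independent as functions on [0, ∞): if ∑ᵢ ζᵢ Bᵢ(τ) = 0 for all τ ≥ 0 with ζ ∈ ℝ^m, then ζ = 0. -/

import Mathlib

open Finset Filter Complex

/-- Key lemma: functions `τ ↦ 1/(exp(θᵢτ)+rᵢ)` with distinct `(θᵢ, rᵢ)`,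
`θᵢ, rᵢ > 0`, are linearly independent on `[0,∞)`. -/
lemma key_indep {m : ℕ} (θ r C : Fin m → ℝ) :
    ∀ s : Finset (Fin m),
    (∀ i ∈ s, 0 < θ i) → (∀ i ∈ s, 0 < r i) →
    (∀ i ∈ s, ∀ j ∈ s, i ≠ j → (θ i, r i) ≠ (θ j, r j)) →
    (∀ τ : ℝ, 0 ≤ τ → ∑ i ∈ s, C i / (Real.exp (θ i * τ) + r i) = 0) →
    ∀ i ∈ s, C i = 0 := by
  intro s
  induction s using Finset.strongInduction with
  | _ s IH =>
  intro hθ hr hd hsum i hi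
  -- pick j with maximal θ
  obtain ⟨j, hj, hjmax⟩ := s.exists_max_image θ ⟨i, hi⟩
  -- set up the strip
  set c : ℝ := Real.pi / θ j with hc
  have hθj : 0 < θ j := hθ j hj
  have hcpos : 0 < c := div_pos Real.pi_pos hθj
  set U : Set ℂ := {z : ℂ | |z.im| < c} with hU
  have hUopen : IsOpen U := by
    have : U = Complex.im ⁻¹' Set.Ioo (-c) c := by
      ext z; simp [hU, abs_lt, Set.mem_Ioo]
    rw [this]; exact isOpen_Ioo.preimage Complex.continuous_im
  have hUconv : Convex ℝ U := by
    have : U = Complex.im ⁻¹' Set.Ioo (-c) c := by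
      ext z; simp [hU, abs_lt, Set.mem_Ioo]
    rw [this]
    exact (convex_Ioo (-c) c).linear_preimage Complex.imLm
  -- denominators are nonzero on U
  have hden : ∀ k ∈ s, ∀ z ∈ U, Complex.exp ((θ k : ℂ) * z) + (r k : ℝ) ≠ 0 := by
    intro k hk z hz h0
    have him : Real.exp (θ k * z.re) * Real.sin (θ k * z.im) = 0 := by
      have := congrArg Complex.im h0
      simpa [Complex.exp_im, Complex.add_im, Complex.mul_im, Complex.mul_re,
        Complex.ofReal_re, Complex.ofReal_im] using this
    have hsin : Real.sin (θ k * z.im) = 0 := by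
      rcases mul_eq_zero.1 him with h | h
      · exact absurd h (Real.exp_pos _).ne'
      · exact h
    have hθk : 0 < θ k := hθ k hk
    have hbound : |θ k * z.im| < Real.pi := by
      have h1 : θ k ≤ θ j := hjmax k hk
      calc |θ k * z.im| = θ k * |z.im| := by
            rw [abs_mul, abs_of_pos hθk]
        _ < θ k * c := by
            apply mul_lt_mul_of_pos_left hz hθk
        _ ≤ θ j * c := by
            apply mul_le_mul_of_nonneg_right h1 hcpos.le
        _ = Real.pi := by
            rw [hc]; field_simp
    have hzero : θ k * z.im = 0 :=
      (Real.sin_eq_zero_iff_of_lt_of_lt (by linarith [abs_lt.1 hbound]) (abs_lt.1 hbound).2).1 hsin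
    have hre : Real.exp (θ k * z.re) * Real.cos (θ k * z.im) + r k = 0 := by
      have := congrArg Complex.re h0
      simpa [Complex.exp_re, Complex.add_re, Complex.mul_im, Complex.mul_re,
        Complex.ofReal_re, Complex.ofReal_im] using this
    rw [hzero, Real.cos_zero, mul_one] at hre
    have := Real.exp_pos (θ k * z.re)
    have := hr k hk
    linarith
  -- the complex function
  set G : ℂ → ℂ := fun z => ∑ k ∈ s, (C k : ℂ) / (Complex.exp ((θ k : ℂ) * z) + (r k : ℝ)) with hG
  have hGanal : AnalyticOnNhd ℂ G U := by
    apply Finset.analyticOnNhd_fun_sum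
    intro k hk
    apply AnalyticOnNhd.div analyticOnNhd_const
    · apply DifferentiableOn.analyticOnNhd _ hUopen
      apply DifferentiableOn.add_const
      exact (Complex.differentiable_exp.comp ((differentiable_id.const_mul _))).differentiableOn
    · exact fun z hz => hden k hk z hz
  -- G vanishes on positive reals
  have hGreal : ∀ τ : ℝ, 0 ≤ τ → G ((τ : ℝ) : ℂ) = 0 := by
    intro τ hτ
    have h := hsum τ hτ
    have : G ((τ : ℝ) : ℂ) = ((∑ k ∈ s, C k / (Real.exp (θ k * τ) + r k) : ℝ) : ℂ) := by
      rw [hG]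
      push_cast [Complex.ofReal_exp]
      norm_num
    rw [this, h, Complex.ofReal_zero]
  -- G ≡ 0 on U by the identity theorem
  have hGzero : Set.EqOn G 0 U := by
    apply hGanal.eqOn_zero_of_preconnected_of_frequently_eq_zero hUconv.isPreconnected
      (z₀ := (1 : ℂ))
    · show (1 : ℂ) ∈ U
      simp [hU, hcpos]
    · have htend : Tendsto (fun n : ℕ => ((1 + (1 : ℝ) / (n + 1) : ℝ) : ℂ)) atTop (nhdsWithin 1 {(1:ℂ)}ᶜ) := by
        rw [tendsto_nhdsWithin_iff]
        constructor
        · have : Tendsto (fun n : ℕ => (1 + (1 : ℝ) / (n + 1) : ℝ)) atTop (nhds 1) := by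
            have := tendsto_one_div_add_atTop_nhds_zero_nat (𝕜 := ℝ)
            simpa using (tendsto_const_nhds (x := (1:ℝ))).add this
          have := this.comp (f := fun n : ℕ => n) tendsto_id
          exact (Complex.continuous_ofReal.tendsto 1).comp (by simpa [Function.comp_def] using this)
        · filter_upwards with n
          simp only [Set.mem_compl_iff, Set.mem_singleton_iff]
          intro h
          have : (1 + (1:ℝ)/(n+1)) = 1 := by exact_mod_cast h
          have : (1:ℝ)/(n+1) = 0 := by linarith
          have hpos : (0:ℝ) < 1/(n+1) := by positivity
          linarith
      apply htend.frequently
      apply Frequently.of_forall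
      intro n
      exact hGreal _ (by positivity)
  -- approach the singular point of the j-th term
  set x : ℝ := Real.log (r j) / θ j with hx
  set zb : ℂ := (x : ℂ) + (c : ℂ) * Complex.I with hzb
  have hrj : 0 < r j := hr j hj
  -- exp(θ j * zb) = -r j
  have hexpj : Complex.exp ((θ j : ℂ) * zb) = -(r j : ℂ) := by
    rw [hzb]
    rw [mul_add, Complex.exp_add]
    have hθx : θ j * x = Real.log (r j) := by rw [hx]; field_simp
    have hθc : θ j * c = Real.pi := by rw [hc]; field_simp
    have h1 : (θ j : ℂ) * (x : ℂ) = ((Real.log (r j) : ℝ) : ℂ) := by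
      rw [← Complex.ofReal_mul, hθx]
    have h2 : (θ j : ℂ) * ((c : ℂ) * Complex.I) = (Real.pi : ℂ) * Complex.I := by
      rw [← mul_assoc, ← Complex.ofReal_mul, hθc]
    rw [h1, h2, Complex.exp_pi_mul_I, ← Complex.ofReal_exp, Real.exp_log hrj]
    ring
  -- for i ≠ j in s, denominator at zb is nonzero
  have hdenb : ∀ k ∈ s, k ≠ j → Complex.exp ((θ k : ℂ) * zb) + (r k : ℝ) ≠ 0 := by
    intro k hk hkj h0
    by_cases hθe : θ k = θ j
    · -- then r k ≠ r j, but exp(θ k zb) = -r j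
      have : Complex.exp ((θ k : ℂ) * zb) = -(r j : ℂ) := by rw [hθe]; exact hexpj
      rw [this] at h0
      have : (r k : ℂ) = (r j : ℂ) := by linear_combination h0
      have hrr : r k = r j := by exact_mod_cast this
      exact hd k hk j hj hkj (by rw [hθe, hrr])
    · have hθk : 0 < θ k := hθ k hk
      have hlt : θ k < θ j := lt_of_le_of_ne (hjmax k hk) hθe
      have hzbim : zb.im = c := by simp [hzb]
      have him : Real.exp (θ k * zb.re) * Real.sin (θ k * c) = 0 := by
        have := congrArg Complex.im h0
        simpa [Complex.exp_im, Complex.add_im, Complex.mul_im, Complex.mul_re,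
          Complex.ofReal_re, Complex.ofReal_im, hzbim] using this
      have hsinpos : 0 < Real.sin (θ k * c) := by
        apply Real.sin_pos_of_pos_of_lt_pi
        · positivity
        · calc θ k * c < θ j * c := by
                apply mul_lt_mul_of_pos_right hlt hcpos
            _ = Real.pi := by rw [hc]; field_simp
      have := Real.exp_pos (θ k * zb.re)
      nlinarith
  -- sequence approaching zb from inside U
  set y : ℕ → ℝ := fun n => c * (1 - 1 / (n + 2)) with hy
  set zseq : ℕ → ℂ := fun n => (x : ℂ) + (y n : ℂ) * Complex.I with hzseq
  have hyin : ∀ n, zseq n ∈ U := by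
    intro n
    have h1 : 0 < (1:ℝ)/(n+2) := by positivity
    have hn : (0:ℝ) ≤ (n:ℝ) := Nat.cast_nonneg n
    have h2 : (1:ℝ)/(n+2) ≤ 1 := by
      rw [div_le_one (by positivity)]; linarith
    have him : (zseq n).im = y n := by simp [hzseq]
    show |(zseq n).im| < c
    rw [him, hy, abs_lt]
    constructor <;> nlinarith
  have hfrac : Tendsto (fun n : ℕ => (1 : ℝ)/(n + 2)) atTop (nhds 0) := by
    have h1 : Tendsto (fun n : ℕ => ((n:ℝ) + 2)) atTop atTop :=
      tendsto_atTop_add_const_right atTop 2 tendsto_natCast_atTop_atTop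
    exact tendsto_const_nhds.div_atTop h1
  have hyim : Tendsto y atTop (nhds c) := by
    rw [hy]
    have h2 : Tendsto (fun n : ℕ => c * (1 - 1/(n+2))) atTop (nhds (c * (1 - 0))) :=
      (tendsto_const_nhds.mul (tendsto_const_nhds.sub hfrac))
    simpa using h2
  have hztend : Tendsto zseq atTop (nhds zb) := by
    rw [hzseq, hzb]
    exact tendsto_const_nhds.add ((Complex.continuous_ofReal.tendsto c |>.comp hyim).mul tendsto_const_nhds)
  -- each denominator tends to its value at zb
  have hdentend : ∀ k, Tendsto (fun n => Complex.exp ((θ k : ℂ) * zseq n) + (r k : ℝ)) atTop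
      (nhds (Complex.exp ((θ k : ℂ) * zb) + (r k : ℝ))) := by
    intro k
    exact ((Complex.continuous_exp.comp (continuous_const.mul continuous_id)).tendsto zb |>.comp hztend).add tendsto_const_nhds
  -- from G = 0 on U : C j / d_j(z n) = - ∑_{k ≠ j} ...
  have hsplit : ∀ n, (C j : ℂ) / (Complex.exp ((θ j : ℂ) * zseq n) + (r j : ℝ))
      = - ∑ k ∈ s.erase j, (C k : ℂ) / (Complex.exp ((θ k : ℂ) * zseq n) + (r k : ℝ)) := by
    intro n
    have h0 : G (zseq n) = 0 := hGzero (hyin n)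
    simp only [hG] at h0
    rw [← Finset.add_sum_erase s _ hj] at h0
    linear_combination h0
  -- limit of the RHS
  set L : ℂ := - ∑ k ∈ s.erase j, (C k : ℂ) / (Complex.exp ((θ k : ℂ) * zb) + (r k : ℝ)) with hL
  have hRtend : Tendsto (fun n => - ∑ k ∈ s.erase j,
      (C k : ℂ) / (Complex.exp ((θ k : ℂ) * zseq n) + (r k : ℝ))) atTop (nhds L) := by
    rw [hL]
    apply Tendsto.neg
    apply tendsto_finset_sum
    intro k hk
    have hks : k ∈ s := Finset.mem_of_mem_erase hk
    have hkj : k ≠ j := Finset.ne_of_mem_erase hk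
    exact Tendsto.div tendsto_const_nhds (hdentend k) (hdenb k hks hkj)
  have hdj : Tendsto (fun n => Complex.exp ((θ j : ℂ) * zseq n) + (r j : ℝ)) atTop (nhds 0) := by
    have := hdentend j
    rw [hexpj] at this
    simpa using this
  have hCj0 : (C j : ℂ) = 0 := by
    have heq : ∀ n, (C j : ℂ) =
        ((C j : ℂ) / (Complex.exp ((θ j : ℂ) * zseq n) + (r j : ℝ))) *
          (Complex.exp ((θ j : ℂ) * zseq n) + (r j : ℝ)) := by
      intro n
      rw [div_mul_cancel₀]
      exact hden j hj (zseq n) (hyin n)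
    have htendC : Tendsto (fun _ : ℕ => (C j : ℂ)) atTop (nhds (L * 0)) := by
      have : Tendsto (fun n => ((C j : ℂ) / (Complex.exp ((θ j : ℂ) * zseq n) + (r j : ℝ))) *
          (Complex.exp ((θ j : ℂ) * zseq n) + (r j : ℝ))) atTop (nhds (L * 0)) := by
        apply Tendsto.mul _ hdj
        simpa [hsplit] using hRtend
      exact this.congr fun n => (heq n).symm
    have := tendsto_nhds_unique htendC tendsto_const_nhds
    rw [mul_zero] at this
    exact this.symm
  have hCj : C j = 0 := by exact_mod_cast hCj0
  -- conclude via the induction hypothesis on s.erase j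
  by_cases hij : i = j
  · rw [hij]; exact hCj
  · apply IH (s.erase j) (Finset.erase_ssubset hj)
      (fun k hk => hθ k (Finset.mem_of_mem_erase hk))
      (fun k hk => hr k (Finset.mem_of_mem_erase hk))
      (fun k hk l hl => hd k (Finset.mem_of_mem_erase hk) l (Finset.mem_of_mem_erase hl))
      _ i (Finset.mem_erase.2 ⟨hij, hi⟩)
    intro τ hτ
    have h0 := hsum τ hτ
    rw [← Finset.add_sum_erase s _ hj, hCj] at h0
    simpa using h0


/-- The CIR Riccati solutions `Bᵢ(τ) = 2ρᵢ(e^{θᵢτ}−1)/((θᵢ−βᵢ)(e^{θᵢτ}−1)+2θᵢ)`,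
with `ρᵢ > 0`, `θᵢ = √(βᵢ²+4ρᵢ)` and pairwise distinct parameter pairs `(ρᵢ, βᵢ)`,
are linearly independent as functions on `[0, ∞)`. -/
theorem stmt_7 {m : ℕ} (β ρ θ : Fin m → ℝ) (hρ : ∀ i, 0 < ρ i)
    (hθ : ∀ i, θ i = Real.sqrt ((β i) ^ 2 + 4 * ρ i))
    (B : Fin m → ℝ → ℝ)
    (hB : ∀ i, ∀ τ : ℝ, B i τ =
      2 * ρ i * (Real.exp (θ i * τ) - 1) /
        ((θ i - β i) * (Real.exp (θ i * τ) - 1) + 2 * θ i))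
    (hdist : ∀ i j, i ≠ j → (ρ i, β i) ≠ (ρ j, β j))
    (ζ : Fin m → ℝ) (hζ : ∀ τ : ℝ, 0 ≤ τ → ∑ i, ζ i * B i τ = 0) :
    ζ = 0 := by
  -- basic facts about θ
  have hθsq : ∀ i, θ i ^ 2 = β i ^ 2 + 4 * ρ i := by
    intro i
    rw [hθ i, Real.sq_sqrt (by nlinarith [hρ i, sq_nonneg (β i)])]
  have hθpos : ∀ i, 0 < θ i := by
    intro i
    rw [hθ i]
    exact Real.sqrt_pos.2 (by nlinarith [hρ i, sq_nonneg (β i)])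
  have habs : ∀ i, |β i| < θ i := by
    intro i
    rw [hθ i]
    rw [show |β i| = Real.sqrt (β i ^ 2) by rw [Real.sqrt_sq_eq_abs]]
    apply Real.sqrt_lt_sqrt (sq_nonneg _)
    nlinarith [hρ i]
  have hsub : ∀ i, 0 < θ i - β i := fun i => by have := (abs_lt.1 (habs i)).2; linarith
  have hadd : ∀ i, 0 < θ i + β i := fun i => by have := (abs_lt.1 (habs i)).1; linarith
  -- reparametrization
  set r : Fin m → ℝ := fun i => (θ i + β i) / (θ i - β i) with hrdef
  set a : Fin m → ℝ := fun i => (θ i + β i) / 2 with hadef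
  set Cc : Fin m → ℝ := fun i => θ i * (θ i + β i) / (θ i - β i) with hCcdef
  have hrpos : ∀ i, 0 < r i := fun i => div_pos (hadd i) (hsub i)
  have hCcpos : ∀ i, 0 < Cc i := fun i => div_pos (mul_pos (hθpos i) (hadd i)) (hsub i)
  -- closed form of B
  have hBform : ∀ i τ, B i τ = a i - Cc i / (Real.exp (θ i * τ) + r i) := by
    intro i τ
    rw [hB i τ]
    set e := Real.exp (θ i * τ) with he
    have hepos : 0 < e := Real.exp_pos _
    have hD : (θ i - β i) * (e - 1) + 2 * θ i = (θ i - β i) * e + (θ i + β i) := by ring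
    have hDpos : 0 < (θ i - β i) * e + (θ i + β i) := by
      have := mul_pos (hsub i) hepos
      linarith [hadd i]
    have her : 0 < e + r i := by linarith [hrpos i]
    rw [hD]
    have h4ρ : 4 * ρ i = θ i ^ 2 - β i ^ 2 := by have := hθsq i; linarith
    have h1 : θ i - β i ≠ 0 := (hsub i).ne'
    have h2 : (θ i - β i) * e + (θ i + β i) ≠ 0 := hDpos.ne'
    have hkey : Cc i / (e + r i) = θ i * (θ i + β i) / ((θ i - β i) * e + (θ i + β i)) := by
      rw [div_eq_div_iff her.ne' hDpos.ne', hCcdef, hrdef]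
      field_simp
      try exact Or.inl trivial
      try tauto
    rw [hkey, hadef]
    rw [div_sub_div _ _ two_ne_zero h2, div_eq_div_iff h2 (by positivity)]
    linear_combination (2 - 2*e + 2*e*(β i) + e^2*(θ i) - e^2*(β i) - θ i - β i + 2*e - 2) * h4ρ
  -- rewrite the vanishing sum
  have hsum2 : ∀ τ : ℝ, 0 ≤ τ →
      (∑ i, ζ i * a i) - ∑ i, ζ i * Cc i / (Real.exp (θ i * τ) + r i) = 0 := by
    intro τ hτ
    have h := hζ τ hτ
    rw [← Finset.sum_sub_distrib, ← h]
    apply Finset.sum_congr rfl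
    intro k _
    rw [hBform k τ]
    ring
  set A : ℝ := ∑ i, ζ i * a i with hAdef
  have hg : ∀ τ : ℝ, 0 ≤ τ → ∑ i, ζ i * Cc i / (Real.exp (θ i * τ) + r i) = A := by
    intro τ hτ
    have := hsum2 τ hτ
    linarith
  have htend : Tendsto (fun τ : ℝ => ∑ i, ζ i * Cc i / (Real.exp (θ i * τ) + r i))
      atTop (nhds 0) := by
    have h0 : (0:ℝ) = ∑ _i : Fin m, (0:ℝ) := by simp
    rw [h0]
    apply tendsto_finset_sum
    intro k _
    apply Tendsto.div_atTop tendsto_const_nhds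
    apply tendsto_atTop_add_const_right
    exact Real.tendsto_exp_atTop.comp (Tendsto.const_mul_atTop (hθpos k) tendsto_id)
  have hA0 : A = 0 := by
    have h2 : Tendsto (fun _ : ℝ => A) atTop (nhds 0) := by
      apply htend.congr'
      filter_upwards [eventually_ge_atTop (0:ℝ)] with τ hτ using hg τ hτ
    exact tendsto_nhds_unique tendsto_const_nhds h2
  have hzero : ∀ τ : ℝ, 0 ≤ τ → ∑ i ∈ Finset.univ, (ζ i * Cc i) / (Real.exp (θ i * τ) + r i) = 0 := by
    intro τ hτ
    have := hg τ hτ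
    rw [hA0] at this
    simpa using this
  -- distinctness of the new parameters
  have hdd : ∀ i ∈ Finset.univ, ∀ j ∈ (Finset.univ : Finset (Fin m)), i ≠ j →
      (θ i, r i) ≠ (θ j, r j) := by
    intro i _ j _ hij h
    have hθe : θ i = θ j := (Prod.ext_iff.1 h).1
    have hre : r i = r j := (Prod.ext_iff.1 h).2
    have hre2 : (θ i + β i) / (θ i - β i) = (θ j + β j) / (θ j - β j) := hre
    rw [div_eq_div_iff (hsub i).ne' (hsub j).ne'] at hre2
    have hβ : β i = β j := by
      have h2 : 2 * θ j * (β i - β j) = 0 := by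
        rw [hθe] at hre2
        linear_combination hre2
      rcases mul_eq_zero.1 h2 with h3 | h3
      · exact absurd h3 (by have := hθpos j; positivity)
      · linarith
    have hρe : ρ i = ρ j := by
      have h1 := hθsq i
      have h2 := hθsq j
      rw [hθe, hβ] at h1
      linarith
    exact hdist i j hij (by rw [hρe, hβ])
  -- apply the key lemma
  have hall := key_indep θ r (fun i => ζ i * Cc i) Finset.univ
    (fun i _ => hθpos i) (fun i _ => hrpos i) hdd hzero
  funext i
  have := hall i (Finset.mem_univ i)
  have hCc := (hCcpos i).ne'
  simp only [Pi.zero_apply]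
  by_contra hne
  exact hne (by
    have := mul_eq_zero.1 this
    tauto)
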